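/- Let γ : ℂⁿ → ℂⁿ be in Poincaré–Dulac normal form: γⱼ(z) = μⱼ zⱼ + Pⱼ(z_{j+1},…,zₙ) where Pⱼ is a polynomial with no constant or linear part depending only on variables with index > j, and 0 < |μ₁| ≤ … ≤ |μₙ| < 1. Then for every ε > 0 there exists T > 0 such that for all real t ≥ T and all z on the unit sphere, |(d_t ∘ γ ∘ d_t⁻¹)(z)|² ≤ |μₙ|² + ε. In particular, for t large enough, d_t γ d_t⁻¹ maps the unit sphere into the open unit ball. -/

import Mathlib

set_option maxHeartbeats 1000000


/-- For γ in Poincaré–Dulac normal form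
γⱼ(z) = μⱼ zⱼ + Pⱼ(z_{j+1},…,zₙ) with 0 < |μ₁| ≤ … ≤ |μₙ| < 1, for every ε > 0
there is T > 0 such that for all real t ≥ T and all z on the unit sphere,
|(d_t ∘ γ ∘ d_t⁻¹)(z)|² ≤ |μₙ|² + ε; in particular, for t large enough,
d_t γ d_t⁻¹ maps the unit sphere into the open unit ball. -/
theorem conjugated_contraction (n : ℕ) (hn : 0 < n) (μ : Fin n → ℂ)
    (hpos : ∀ j, 0 < ‖μ j‖)
    (hmono : ∀ i j : Fin n, i ≤ j → ‖μ i‖ ≤ ‖μ j‖)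
    (hlt : ∀ j, ‖μ j‖ < 1)
    (A : Fin n → Finset (Fin n → ℕ)) (a : Fin n → (Fin n → ℕ) → ℂ)
    -- each monomial of Pⱼ depends only on variables of index > j and is nonconstant
    (hsupp : ∀ j, ∀ m ∈ A j, (∀ l : Fin n, l ≤ j → m l = 0) ∧ ∃ l : Fin n, m l ≠ 0)
    (γ : EuclideanSpace ℂ (Fin n) → EuclideanSpace ℂ (Fin n))
    (hγ : ∀ z j, γ z j = μ j * z j + ∑ m ∈ A j, a j m * ∏ l, z l ^ m l)
    (Φ : ℝ → EuclideanSpace ℂ (Fin n) → EuclideanSpace ℂ (Fin n))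
    (hΦ : ∀ t z j, Φ t z j = (t : ℂ) ^ (j.val + 1) *
      γ (WithLp.toLp 2 (fun l => ((t : ℂ) ^ (l.val + 1))⁻¹ * z l)) j) :
    (∀ ε > (0 : ℝ), ∃ T > (0 : ℝ), ∀ t : ℝ, T ≤ t →
        ∀ z : EuclideanSpace ℂ (Fin n), ‖z‖ = 1 →
          ‖Φ t z‖ ^ 2 ≤ ‖μ ⟨n - 1, Nat.sub_lt hn Nat.one_pos⟩‖ ^ 2 + ε) ∧
    (∃ T > (0 : ℝ), ∀ t : ℝ, T ≤ t →
        ∀ z : EuclideanSpace ℂ (Fin n), ‖z‖ = 1 → ‖Φ t z‖ < 1) := by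
  set b : ℝ := ‖μ ⟨n - 1, Nat.sub_lt hn Nat.one_pos⟩‖ with hbdef
  have hb0 : 0 ≤ b := norm_nonneg _
  have hb1 : b < 1 := hlt _
  have hbj : ∀ j : Fin n, ‖μ j‖ ≤ b := by
    intro j
    refine hmono j _ ?_
    rw [Fin.le_def]
    have := j.isLt
    simp only []
    omega
  set C : Fin n → ℝ := fun j => ∑ m ∈ A j, ‖a j m‖ with hCdef
  have hC0 : ∀ j, 0 ≤ C j := fun j =>
    Finset.sum_nonneg fun m _ => norm_nonneg _
  set D : ℝ := ∑ j, (2 * b * C j + (C j) ^ 2) with hDdef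
  clear_value b C D
  have hD0 : 0 ≤ D := by
    rw [hDdef]
    apply Finset.sum_nonneg
    intro j _
    have h1 := hC0 j
    nlinarith
  -- componentwise bound
  have key : ∀ t : ℝ, 1 ≤ t → ∀ z : EuclideanSpace ℂ (Fin n),
      (∀ l, ‖z l‖ ≤ 1) → ∀ j,
      ‖Φ t z j‖ ≤ b * ‖z j‖ + C j / t := by
    intro t ht z hz j
    have ht0 : (0 : ℝ) < t := lt_of_lt_of_le one_pos ht
    have htc : (t : ℂ) ≠ 0 := by exact_mod_cast ht0.ne'
    rw [hΦ, hγ, mul_add, Finset.mul_sum]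
    simp only [PiLp.toLp_apply]
    have h1 : (t : ℂ) ^ (j.val + 1) * (μ j * (((t : ℂ) ^ (j.val + 1))⁻¹ * z j))
        = μ j * z j := by
      field_simp
    rw [h1]
    refine le_trans (norm_add_le _ _) ?_
    have h2 : ‖μ j * z j‖ ≤ b * ‖z j‖ := by
      rw [norm_mul]
      exact mul_le_mul_of_nonneg_right (hbj j) (norm_nonneg _)
    have h3 : ‖∑ m ∈ A j, (t : ℂ) ^ (j.val + 1) *
        (a j m * ∏ l, (((t : ℂ) ^ (l.val + 1))⁻¹ * z l) ^ m l)‖ ≤ C j / t := by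
      refine le_trans (norm_sum_le _ _) ?_
      simp only [hCdef]
      rw [Finset.sum_div]
      apply Finset.sum_le_sum
      intro m hm
      obtain ⟨hm0, l₀, hl₀⟩ := hsupp j m hm
      have hjl₀ : j < l₀ := by
        by_contra h
        exact hl₀ (hm0 l₀ (not_lt.mp h))
      -- compute the absolute value
      have habs : ‖((t : ℝ) : ℂ)‖ = t := by
        rw [Complex.norm_real, Real.norm_eq_abs, abs_of_pos ht0]
      rw [norm_mul, norm_mul, norm_pow, habs, norm_prod]
      have hprod : ∀ l : Fin n, ‖(((t : ℂ) ^ (l.val + 1))⁻¹ * z l) ^ m l‖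
          = ((t ^ (l.val + 1))⁻¹) ^ m l * ‖z l‖ ^ m l := by
        intro l
        rw [norm_pow, norm_mul, norm_inv, norm_pow, habs, mul_pow]
      simp only [hprod]
      rw [Finset.prod_mul_distrib]
      set S : ℕ := ∑ l, (l.val + 1) * m l with hSdef
      have hS : j.val + 2 ≤ S := by
        have h1 : (l₀.val + 1) * m l₀ ≤ S := by
          apply Finset.single_le_sum (f := fun l : Fin n => (l.val + 1) * m l)
          · intro i _; positivity
          · exact Finset.mem_univ _
        have h2 : l₀.val + 1 ≤ (l₀.val + 1) * m l₀ :=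
          Nat.le_mul_of_pos_right _ (Nat.pos_of_ne_zero hl₀)
        have h3 : j.val + 1 < l₀.val + 1 := by
          have := hjl₀
          omega
        omega
      have hprodt : ∏ l : Fin n, ((t ^ (l.val + 1))⁻¹) ^ m l = (t ^ S)⁻¹ := by
        rw [hSdef]
        rw [← Finset.prod_pow_eq_pow_sum]
        rw [← Finset.prod_inv_distrib]
        apply Finset.prod_congr rfl
        intro l _
        rw [inv_pow, ← pow_mul]
      rw [hprodt]
      have hz1 : ∏ l : Fin n, ‖z l‖ ^ m l ≤ 1 := by
        apply Finset.prod_le_one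
        · intro l _; positivity
        · intro l _
          exact pow_le_one₀ (norm_nonneg _) (hz l)
      have hts : t ^ (j.val + 1) * (t ^ S)⁻¹ ≤ t⁻¹ := by
        rw [← div_eq_mul_inv, ← one_div t, div_le_div_iff₀ (by positivity) ht0]
        calc t ^ (j.val + 1) * t = t ^ (j.val + 2) := by ring
        _ ≤ t ^ S := pow_le_pow_right₀ ht hS
        _ = 1 * t ^ S := (one_mul _).symm
      calc t ^ (j.val + 1) * (‖a j m‖ *
            ((t ^ S)⁻¹ * ∏ l : Fin n, ‖z l‖ ^ m l))
          = ‖a j m‖ * ((t ^ (j.val + 1) * (t ^ S)⁻¹) *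
            ∏ l : Fin n, ‖z l‖ ^ m l) := by ring
        _ ≤ ‖a j m‖ * (t⁻¹ * 1) := by
            apply mul_le_mul_of_nonneg_left _ (norm_nonneg _)
            apply mul_le_mul hts hz1 (by positivity) (by positivity)
        _ = ‖a j m‖ / t := by rw [mul_one, div_eq_mul_inv]
    exact add_le_add h2 h3
  -- squared norm bound
  have key2 : ∀ t : ℝ, 1 ≤ t → ∀ z : EuclideanSpace ℂ (Fin n), ‖z‖ = 1 →
      ‖Φ t z‖ ^ 2 ≤ b ^ 2 + D / t := by
    intro t ht z hz
    have ht0 : (0 : ℝ) < t := lt_of_lt_of_le one_pos ht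
    have hsum : ∑ j, ‖z j‖ ^ 2 = 1 := by
      have := EuclideanSpace.norm_eq z
      rw [hz] at this
      have h2 : Real.sqrt (∑ j, ‖z j‖ ^ 2) = 1 := this.symm
      have := Real.sqrt_eq_one.mp h2
      simpa using this
    have hzl : ∀ l, ‖z l‖ ≤ 1 := by
      intro l
      have h1 : ‖z l‖ ^ 2 ≤ 1 := by
        rw [← hsum]
        exact Finset.single_le_sum (f := fun j => ‖z j‖ ^ 2)
          (fun i _ => by positivity) (Finset.mem_univ l)
      nlinarith [norm_nonneg (z l)]
    have hnorm : ‖Φ t z‖ ^ 2 = ∑ j, ‖Φ t z j‖ ^ 2 := by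
      rw [EuclideanSpace.norm_eq, Real.sq_sqrt (by positivity)]
    rw [hnorm]
    have step : ∀ j : Fin n, ‖Φ t z j‖ ^ 2 ≤
        b ^ 2 * ‖z j‖ ^ 2 + (2 * b * C j + (C j) ^ 2) / t := by
      intro j
      have h1 := key t ht z hzl j
      have h2 : ‖Φ t z j‖ ^ 2 ≤ (b * ‖z j‖ + C j / t) ^ 2 := by
        apply pow_le_pow_left₀ (norm_nonneg _) h1
      refine h2.trans ?_
      have hzj := hzl j
      have hzj0 := norm_nonneg (z j)
      have hCj := hC0 j
      have ht2 : t ≤ t ^ 2 := by nlinarith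
      have e2 : (C j / t) ^ 2 ≤ C j ^ 2 / t := by
        rw [div_pow, div_le_div_iff₀ (by positivity) ht0]
        nlinarith [sq_nonneg (C j)]
      have e3 : 2 * (b * ‖z j‖) * (C j / t) ≤ 2 * b * C j / t := by
        have heq : 2 * (b * ‖z j‖) * (C j / t)
            = (2 * b * ‖z j‖ * C j) / t := by ring
        rw [heq, div_le_div_iff₀ ht0 ht0]
        nlinarith [mul_nonneg (mul_nonneg (mul_nonneg (by linarith : (0:ℝ) ≤ 2 * b)
          (hC0 j)) ht0.le) (by linarith : (0:ℝ) ≤ 1 - ‖z j‖)]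
      calc (b * ‖z j‖ + C j / t) ^ 2
          = b ^ 2 * ‖z j‖ ^ 2 + 2 * (b * ‖z j‖) * (C j / t)
            + (C j / t) ^ 2 := by ring
        _ ≤ b ^ 2 * ‖z j‖ ^ 2 + 2 * b * C j / t + C j ^ 2 / t :=
            add_le_add (add_le_add le_rfl e3) e2
        _ = b ^ 2 * ‖z j‖ ^ 2 + (2 * b * C j + C j ^ 2) / t := by ring
    calc ∑ j, ‖Φ t z j‖ ^ 2
        ≤ ∑ j, (b ^ 2 * ‖z j‖ ^ 2 + (2 * b * C j + (C j) ^ 2) / t) :=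
          Finset.sum_le_sum fun j _ => step j
      _ = b ^ 2 * (∑ j, ‖z j‖ ^ 2) + D / t := by
          rw [Finset.sum_add_distrib, ← Finset.mul_sum, hDdef, Finset.sum_div]
      _ = b ^ 2 + D / t := by rw [hsum, mul_one]
  -- part 1
  have part1 : ∀ ε > (0 : ℝ), ∃ T > (0 : ℝ), ∀ t : ℝ, T ≤ t →
      ∀ z : EuclideanSpace ℂ (Fin n), ‖z‖ = 1 →
        ‖Φ t z‖ ^ 2 ≤ b ^ 2 + ε := by
    intro ε hε
    refine ⟨max 1 (D / ε), lt_of_lt_of_le one_pos (le_max_left _ _), ?_⟩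
    intro t ht z hz
    have ht1 : 1 ≤ t := le_trans (le_max_left _ _) ht
    have ht0 : (0 : ℝ) < t := lt_of_lt_of_le one_pos ht1
    have hDt : D / t ≤ ε := by
      rw [div_le_iff₀ ht0]
      have := le_trans (le_max_right 1 (D / ε)) ht
      calc D = (D / ε) * ε := by field_simp
        _ ≤ t * ε := mul_le_mul_of_nonneg_right this hε.le
        _ = ε * t := mul_comm _ _
    exact le_trans (key2 t ht1 z hz) (add_le_add le_rfl hDt)
  refine ⟨part1, ?_⟩
  -- part 2
  have hb2 : b ^ 2 < 1 := by nlinarith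
  obtain ⟨T, hT, hTe⟩ := part1 ((1 - b ^ 2) / 2) (by linarith)
  refine ⟨T, hT, ?_⟩
  intro t ht z hz
  have := hTe t ht z hz
  have hlt1 : ‖Φ t z‖ ^ 2 < 1 := by linarith
  nlinarith [norm_nonneg (Φ t z)]
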